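/- In F₂⁴, the set D = {0, e₁, e₂, e₃, e₄, e₁+e₃, e₁+e₄, e₁+e₃+e₄} is not equal to B_d(0,r) for any TS-metric d on F₂⁴ and any r > 0. -/
import Mathlib


open Set Function

/-- A weight on a binary vector space `ι → ZMod 2`. -/
def IsWeight {ι : Type*} (ω : (ι → ZMod 2) → ℝ) : Prop :=
  (∀ x, 0 ≤ ω x) ∧ (∀ x, ω x = 0 ↔ x = 0) ∧ ∀ x y, ω (x + y) ≤ ω x + ω y

/-- A function respects the support of vectors. -/
def RespectsSupport {ι : Type*} (ω : (ι → ZMod 2) → ℝ) : Prop :=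
  ∀ x y : ι → ZMod 2, Function.support x ⊆ Function.support y → ω x ≤ ω y

/-- A TS-metric: a (translation-invariant) metric determined by a weight
that respects support, i.e. `d x y = ω (x + y)` (note `-y = y` in char 2). -/
def IsTSMetric {ι : Type*} (d : (ι → ZMod 2) → (ι → ZMod 2) → ℝ) : Prop :=
  ∃ ω, IsWeight ω ∧ RespectsSupport ω ∧ ∀ x y, d x y = ω (x + y)

/-- The ball `B_d(x, r)`. -/
def tsBall {ι : Type*} (d : (ι → ZMod 2) → (ι → ZMod 2) → ℝ) (x : ι → ZMod 2) (r : ℝ) :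
    Set (ι → ZMod 2) := {y | d x y ≤ r}

/-- `(D, C)` is a tiling: the translates `c + D`, `c ∈ C`, are pairwise disjoint
and cover the whole space. -/
def IsTiling {ι : Type*} (D C : Set (ι → ZMod 2)) : Prop :=
  (⋃ c ∈ C, (c + ·) '' D) = Set.univ ∧
  C.Pairwise fun c c' => Disjoint ((c + ·) '' D) ((c' + ·) '' D)

/-- `C` is a `(d, r)`-perfect code: the balls of radius `r` centered at codewords
are pairwise disjoint and cover the whole space. -/
def IsPerfectCode {ι : Type*} (d : (ι → ZMod 2) → (ι → ZMod 2) → ℝ) (r : ℝ)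
    (C : Set (ι → ZMod 2)) : Prop :=
  (⋃ c ∈ C, tsBall d c r) = Set.univ ∧
  C.Pairwise fun c c' => Disjoint (tsBall d c r) (tsBall d c' r)

/-- A polyhedromino: any two points of `D` are joined by a geodesic path
(w.r.t. the Hamming distance) lying inside `D`. -/
def IsPolyhedromino {ι : Type*} [Fintype ι] (D : Set (ι → ZMod 2)) : Prop :=
  ∀ x ∈ D, ∀ y ∈ D, ∃ γ : ℕ → (ι → ZMod 2),
    γ 0 = x ∧ γ (hammingDist x y) = y ∧
    (∀ i ≤ hammingDist x y, γ i ∈ D) ∧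
    ∀ i < hammingDist x y, hammingDist (γ i) (γ (i + 1)) = 1

/-- A poly-tiling: a tiling whose tile is a polyhedromino. -/
def IsPolyTiling {ι : Type*} [Fintype ι] (D C : Set (ι → ZMod 2)) : Prop :=
  IsTiling D C ∧ IsPolyhedromino D

/-- The vector `e_i` with support `{i}`. -/
def unitVec {ι : Type*} [DecidableEq ι] (i : ι) : ι → ZMod 2 := Pi.single i 1

/-- The `F`-combinatorial weight: the minimal number of members of `F` needed
to cover the support of `x`. -/
noncomputable def combWeight {ι : Type*} [DecidableEq ι] (F : Finset (Finset ι))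
    (x : ι → ZMod 2) : ℕ :=
  sInf {k | ∃ A : Finset (Finset ι), A ⊆ F ∧ A.card = k ∧ Function.support x ⊆ ↑(A.sup id)}

/-- The axioms of a metric. -/
def IsMetric {α : Type*} (d : α → α → ℝ) : Prop :=
  (∀ x y, d x y = 0 ↔ x = y) ∧ (∀ x y, d x y = d y x) ∧ ∀ x y z, d x z ≤ d x y + d y z

/-- The max-metric on the product (concatenation) space, identified with
functions on `Fin n ⊕ Fin m`. -/
def dmax {n m : ℕ} (d₁ : (Fin n → ZMod 2) → (Fin n → ZMod 2) → ℝ)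
    (d₂ : (Fin m → ZMod 2) → (Fin m → ZMod 2) → ℝ)
    (w w' : Fin n ⊕ Fin m → ZMod 2) : ℝ :=
  max (d₁ (fun i => w (Sum.inl i)) (fun i => w' (Sum.inl i)))
      (d₂ (fun j => w (Sum.inr j)) (fun j => w' (Sum.inr j)))

/-- in `F₂⁴`, the tile `{0, e₁, e₂, e₃, e₄, e₁+e₃, e₁+e₄, e₁+e₃+e₄}`
(indices shifted to `0,…,3`) is not a TS-ball centered at `0`. -/
theorem stmt_6 (d : (Fin 4 → ZMod 2) → (Fin 4 → ZMod 2) → ℝ) (r : ℝ)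
    (hd : IsTSMetric d) (hr : 0 < r) :
    tsBall d 0 r ≠
      ({0, unitVec 0, unitVec 1, unitVec 2, unitVec 3,
        unitVec 0 + unitVec 2, unitVec 0 + unitVec 3,
        unitVec 0 + unitVec 2 + unitVec 3} : Set (Fin 4 → ZMod 2)) := by
  intro hEq
  obtain ⟨ω, ⟨hpos, hzero, htri⟩, hsupp, hdw⟩ := hd
  set v : Fin 4 → ZMod 2 := unitVec 0 + unitVec 2 + unitVec 3 with hv
  set w : Fin 4 → ZMod 2 := unitVec 2 + unitVec 3 with hw
  have hvD : v ∈ tsBall d 0 r := by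
    rw [hEq]
    simp [Set.mem_insert_iff, hv]
  have h1 : ω v ≤ r := by simpa [tsBall, hdw] using hvD
  have hsub : Function.support w ⊆ Function.support v := by
    intro i hi
    fin_cases i <;> simp_all [hv, hw, unitVec, Pi.single, Function.support] <;> decide
  have h2 : ω w ≤ r := le_trans (hsupp w v hsub) h1
  have hwB : w ∈ tsBall d 0 r := by simpa [tsBall, hdw] using h2
  rw [hEq] at hwB
  simp only [Set.mem_insert_iff, Set.mem_singleton_iff, hw, unitVec] at hwB
  revert hwB
  decide
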